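/- The planar convex bodies K = conv{(±1,0), (0, ±(√2−1))} and L = conv{(0,±1), (±(√2−1), 0)} satisfy R(K) = R(L) = 1 and R(K + L) = √2, where R denotes the Euclidean circumradius and K + L the Minkowski sum; yet K and L are not contained in mutually orthogonal linear subspaces. -/

import Mathlib

open Metric Pointwise

/-- The Euclidean circumradius of a set `K`. -/
noncomputable def circR {n : ℕ} (K : Set (EuclideanSpace ℝ (Fin n))) : ℝ :=
  sInf {ρ : ℝ | 0 ≤ ρ ∧ ∃ x, K ⊆ Metric.closedBall x ρ}

private lemma norm_two (u v : ℝ) :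
    @norm (EuclideanSpace ℝ (Fin 2)) _ !₂[u, v] = Real.sqrt (u ^ 2 + v ^ 2) := by
  rw [EuclideanSpace.norm_eq]
  simp [Fin.sum_univ_two, Real.norm_eq_abs, sq_abs]

private lemma dist_two (u v u' v' : ℝ) :
    @dist (EuclideanSpace ℝ (Fin 2)) _ !₂[u, v] !₂[u', v'] =
      Real.sqrt ((u - u') ^ 2 + (v - v') ^ 2) := by
  rw [EuclideanSpace.dist_eq]
  simp [Fin.sum_univ_two, Real.dist_eq, sq_abs]

private lemma add_two (u v u' v' : ℝ) :
    (!₂[u, v] + !₂[u', v'] : EuclideanSpace ℝ (Fin 2)) = !₂[u + u', v + v'] := by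
  ext i
  fin_cases i <;> rfl

private lemma norm_le_two (u v c : ℝ) (hc : 0 ≤ c) (h : u ^ 2 + v ^ 2 ≤ c ^ 2) :
    @norm (EuclideanSpace ℝ (Fin 2)) _ !₂[u, v] ≤ c := by
  rw [norm_two]
  calc Real.sqrt (u ^ 2 + v ^ 2) ≤ Real.sqrt (c ^ 2) := Real.sqrt_le_sqrt h
  _ = c := Real.sqrt_sq hc

private lemma lb_aux {ρ : ℝ} {x p q : EuclideanSpace ℝ (Fin 2)}
    {S : Set (EuclideanSpace ℝ (Fin 2))} (hS : S ⊆ closedBall x ρ)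
    (hp : p ∈ S) (hq : q ∈ S) : dist p q ≤ 2 * ρ := by
  have h1 : dist p x ≤ ρ := mem_closedBall.mp (hS hp)
  have h2 : dist q x ≤ ρ := mem_closedBall.mp (hS hq)
  have := dist_triangle p x q
  rw [dist_comm x q] at this
  linarith

theorem equality_not_only_if_example :
    let K : Set (EuclideanSpace ℝ (Fin 2)) :=
      convexHull ℝ {!₂[1, 0], !₂[-1, 0], !₂[0, Real.sqrt 2 - 1], !₂[0, -(Real.sqrt 2 - 1)]}
    let L : Set (EuclideanSpace ℝ (Fin 2)) :=
      convexHull ℝ {!₂[0, 1], !₂[0, -1], !₂[Real.sqrt 2 - 1, 0], !₂[-(Real.sqrt 2 - 1), 0]}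
    circR K = 1 ∧ circR L = 1 ∧ circR (K + L) = Real.sqrt 2 ∧
      ¬ ∃ (V W : Submodule ℝ (EuclideanSpace ℝ (Fin 2))),
        (∀ x ∈ V, ∀ y ∈ W, (inner ℝ x y : ℝ) = 0) ∧
          K ⊆ (V : Set (EuclideanSpace ℝ (Fin 2))) ∧
          L ⊆ (W : Set (EuclideanSpace ℝ (Fin 2))) := by
  intro K L
  have hs : Real.sqrt 2 * Real.sqrt 2 = 2 := Real.mul_self_sqrt (by norm_num)
  have h1s : (1 : ℝ) < Real.sqrt 2 := by
    nlinarith [Real.sqrt_nonneg 2]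
  have hs2 : Real.sqrt 2 ≤ 2 := by nlinarith [Real.sqrt_nonneg 2]
  -- K ⊆ closedBall 0 1
  have hK1 : K ⊆ closedBall (0 : EuclideanSpace ℝ (Fin 2)) 1 := by
    apply convexHull_min _ (convex_closedBall _ _)
    intro p hp
    rw [mem_closedBall_zero_iff]
    simp only [Set.mem_insert_iff, Set.mem_singleton_iff] at hp
    rcases hp with rfl | rfl | rfl | rfl <;>
      exact norm_le_two _ _ _ zero_le_one (by nlinarith)
  have hL1 : L ⊆ closedBall (0 : EuclideanSpace ℝ (Fin 2)) 1 := by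
    apply convexHull_min _ (convex_closedBall _ _)
    intro p hp
    rw [mem_closedBall_zero_iff]
    simp only [Set.mem_insert_iff, Set.mem_singleton_iff] at hp
    rcases hp with rfl | rfl | rfl | rfl <;>
      exact norm_le_two _ _ _ zero_le_one (by nlinarith)
  have hbdd : ∀ (S : Set (EuclideanSpace ℝ (Fin 2))),
      BddBelow {ρ : ℝ | 0 ≤ ρ ∧ ∃ x, S ⊆ closedBall x ρ} :=
    fun S => ⟨0, fun ρ hρ => hρ.1⟩
  refine ⟨?_, ?_, ?_, ?_⟩
  · -- circR K = 1
    unfold circR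
    apply le_antisymm
    · refine csInf_le (hbdd K) ?_
      exact ⟨zero_le_one, 0, hK1⟩
    · refine le_csInf ⟨1, zero_le_one, 0, hK1⟩ ?_
      rintro ρ ⟨hρ0, x, hx⟩
      have hp : (!₂[1, 0] : EuclideanSpace ℝ (Fin 2)) ∈ K :=
        subset_convexHull ℝ _ (by simp)
      have hq : (!₂[-1, 0] : EuclideanSpace ℝ (Fin 2)) ∈ K :=
        subset_convexHull ℝ _ (by simp)
      have hd := lb_aux hx hp hq
      rw [dist_two] at hd
      have : Real.sqrt ((1 - -1) ^ 2 + (0 - 0 : ℝ) ^ 2) = 2 := by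
        rw [show ((1 - -1) ^ 2 + (0 - 0 : ℝ) ^ 2) = 2 ^ 2 by norm_num]
        exact Real.sqrt_sq (by norm_num)
      rw [this] at hd
      linarith
  · -- circR L = 1
    unfold circR
    apply le_antisymm
    · refine csInf_le (hbdd L) ?_
      exact ⟨zero_le_one, 0, hL1⟩
    · refine le_csInf ⟨1, zero_le_one, 0, hL1⟩ ?_
      rintro ρ ⟨hρ0, x, hx⟩
      have hp : (!₂[0, 1] : EuclideanSpace ℝ (Fin 2)) ∈ L :=
        subset_convexHull ℝ _ (by simp)
      have hq : (!₂[0, -1] : EuclideanSpace ℝ (Fin 2)) ∈ L :=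
        subset_convexHull ℝ _ (by simp)
      have hd := lb_aux hx hp hq
      rw [dist_two] at hd
      have : Real.sqrt ((0 - 0 : ℝ) ^ 2 + (1 - -1) ^ 2) = 2 := by
        rw [show ((0 - 0 : ℝ) ^ 2 + (1 - -1) ^ 2) = 2 ^ 2 by norm_num]
        exact Real.sqrt_sq (by norm_num)
      rw [this] at hd
      linarith
  · -- circR (K + L) = √2
    have hKL : K + L ⊆ closedBall (0 : EuclideanSpace ℝ (Fin 2)) (Real.sqrt 2) := by
      have : K + L = convexHull ℝ
          ({!₂[1, 0], !₂[-1, 0], !₂[0, Real.sqrt 2 - 1], !₂[0, -(Real.sqrt 2 - 1)]} +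
           ({!₂[0, 1], !₂[0, -1], !₂[Real.sqrt 2 - 1, 0], !₂[-(Real.sqrt 2 - 1), 0]} :
            Set (EuclideanSpace ℝ (Fin 2)))) := (convexHull_add _ _).symm
      rw [this]
      apply convexHull_min _ (convex_closedBall _ _)
      rintro p hp
      rw [Set.mem_add] at hp
      obtain ⟨a, ha, b, hb, rfl⟩ := hp
      rw [mem_closedBall_zero_iff]
      simp only [Set.mem_insert_iff, Set.mem_singleton_iff] at ha hb
      rcases ha with rfl | rfl | rfl | rfl <;> rcases hb with rfl | rfl | rfl | rfl <;>
        · rw [add_two]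
          exact norm_le_two _ _ _ (Real.sqrt_nonneg 2) (by nlinarith)
    unfold circR
    apply le_antisymm
    · refine csInf_le (hbdd _) ?_
      exact ⟨Real.sqrt_nonneg 2, 0, hKL⟩
    · refine le_csInf ⟨Real.sqrt 2, Real.sqrt_nonneg 2, 0, hKL⟩ ?_
      rintro ρ ⟨hρ0, x, hx⟩
      have hp : (!₂[1, 1] : EuclideanSpace ℝ (Fin 2)) ∈ K + L := by
        rw [show (!₂[1, 1] : EuclideanSpace ℝ (Fin 2)) = !₂[1, 0] + !₂[0, 1] by
          rw [add_two]; norm_num]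
        exact Set.add_mem_add (subset_convexHull ℝ _ (by simp))
          (subset_convexHull ℝ _ (by simp))
      have hq : (!₂[-1, -1] : EuclideanSpace ℝ (Fin 2)) ∈ K + L := by
        rw [show (!₂[-1, -1] : EuclideanSpace ℝ (Fin 2)) = !₂[-1, 0] + !₂[0, -1] by
          rw [add_two]; norm_num]
        exact Set.add_mem_add (subset_convexHull ℝ _ (by simp))
          (subset_convexHull ℝ _ (by simp))
      have hd := lb_aux hx hp hq
      rw [dist_two] at hd
      have : Real.sqrt ((1 - -1) ^ 2 + (1 - -1 : ℝ) ^ 2) = 2 * Real.sqrt 2 := by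
        rw [show ((1 - -1) ^ 2 + (1 - -1 : ℝ) ^ 2) = (2 * Real.sqrt 2) ^ 2 by nlinarith]
        exact Real.sqrt_sq (by positivity)
      rw [this] at hd
      linarith
  · -- not mutually orthogonal
    rintro ⟨V, W, horth, hKV, hLW⟩
    have hx : (!₂[0, Real.sqrt 2 - 1] : EuclideanSpace ℝ (Fin 2)) ∈ V :=
      hKV (subset_convexHull ℝ _ (by simp))
    have hy : (!₂[0, 1] : EuclideanSpace ℝ (Fin 2)) ∈ W :=
      hLW (subset_convexHull ℝ _ (by simp))
    have h := horth _ hx _ hy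
    simp [PiLp.inner_apply, Fin.sum_univ_two, RCLike.inner_apply] at h
    linarith
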